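/- (Caro–Wei bound) For any finite simple graph G = (V, E), the independence number α(G) satisfies α(G) ≥ Σ_{v∈V} 1/(1 + deg(v)). -/

import Mathlib

open Finset

private lemma caro_wei_aux {V : Type*} [Fintype V] [DecidableEq V]
    (G : SimpleGraph V) [DecidableRel G.Adj] :
    ∀ n (s : Finset V), s.card = n →
    ∃ t, t ⊆ s ∧ (↑t : Set V).Pairwise (fun a b => ¬ G.Adj a b) ∧
      ∑ v ∈ s, (1:ℝ) / (1 + (s.filter (fun w => G.Adj v w)).card) ≤ t.card := by
  intro n
  induction n using Nat.strong_induction_on with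
  | _ n ih =>
    intro s hs
    rcases s.eq_empty_or_nonempty with rfl | hne
    · exact ⟨∅, by simp, by simp, by simp⟩
    · obtain ⟨v, hv, hvmin⟩ := s.exists_min_image
        (fun u => (s.filter (fun w => G.Adj u w)).card) hne
      set d := (s.filter (fun w => G.Adj v w)).card with hd
      set N : Finset V := insert v (s.filter (fun w => G.Adj v w)) with hN
      have hvnotfil : v ∉ s.filter (fun w => G.Adj v w) := by
        simp [SimpleGraph.irrefl]
      have hNcard : N.card = d + 1 := by
        rw [hN, Finset.card_insert_of_notMem hvnotfil]
      have hNs : N ⊆ s := by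
        rw [hN]
        intro u hu
        rcases Finset.mem_insert.mp hu with rfl | hu
        · exact hv
        · exact (Finset.mem_filter.mp hu).1
      set s' := s \ N with hs'
      have hvN : v ∈ N := Finset.mem_insert_self _ _
      have hvs' : v ∉ s' := by simp [hs', hvN]
      have hcard' : s'.card < n := by
        rw [← hs]
        have h1 : s'.card ≤ s.card - 1 := by
          have := Finset.card_le_card (Finset.sdiff_subset (s := s) (t := N))
          have h2 : s'.card < s.card := by
            apply Finset.card_lt_card
            constructor
            · exact Finset.sdiff_subset
            · intro hsub
              exact hvs' (hsub hv)
          omega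
        have : 0 < s.card := Finset.card_pos.mpr hne
        omega
      obtain ⟨t, hts, htind, htsum⟩ := ih s'.card hcard' s' rfl
      have hvt : v ∉ t := fun h => hvs' (hts h)
      refine ⟨insert v t, ?_, ?_, ?_⟩
      · intro u hu
        rcases Finset.mem_insert.mp hu with rfl | hu
        · exact hv
        · exact Finset.sdiff_subset (hts hu)
      · -- independence
        have hnoadj : ∀ u ∈ t, ¬ G.Adj v u := by
          intro u hu hadj
          have hu' : u ∈ s' := hts hu
          have : u ∈ N := by
            rw [hN]
            exact Finset.mem_insert_of_mem (Finset.mem_filter.mpr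
              ⟨(Finset.mem_sdiff.mp hu').1, hadj⟩)
          exact (Finset.mem_sdiff.mp hu').2 this
        rw [Finset.coe_insert]
        apply Set.Pairwise.insert htind
        intro u hu hne'
        exact ⟨fun h => hnoadj u hu h, fun h => hnoadj u hu (G.adj_symm h)⟩
      · -- sum bound
        have hsplit : ∑ u ∈ s', (1:ℝ) / (1 + (s.filter (fun w => G.Adj u w)).card)
            + ∑ u ∈ N, (1:ℝ) / (1 + (s.filter (fun w => G.Adj u w)).card)
            = ∑ u ∈ s, (1:ℝ) / (1 + (s.filter (fun w => G.Adj u w)).card) :=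
          Finset.sum_sdiff hNs
        have hbound1 : ∑ u ∈ N, (1:ℝ) / (1 + (s.filter (fun w => G.Adj u w)).card) ≤ 1 := by
          have : ∀ u ∈ N, (1:ℝ) / (1 + (s.filter (fun w => G.Adj u w)).card)
              ≤ 1 / (1 + d) := by
            intro u hu
            apply one_div_le_one_div_of_le
            · positivity
            · have h2 : (d:ℝ) ≤ ((s.filter (fun w => G.Adj u w)).card : ℝ) := by
                exact_mod_cast hvmin u (hNs hu)
              linarith
          calc ∑ u ∈ N, (1:ℝ) / (1 + (s.filter (fun w => G.Adj u w)).card)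
              ≤ ∑ _u ∈ N, (1:ℝ) / (1 + d) := Finset.sum_le_sum this
            _ = (d + 1) * (1 / (1 + d)) := by
                rw [Finset.sum_const, hNcard]; push_cast; ring
            _ = 1 := by
                field_simp
                ring
        have hbound2 : ∑ u ∈ s', (1:ℝ) / (1 + (s.filter (fun w => G.Adj u w)).card)
            ≤ ∑ u ∈ s', (1:ℝ) / (1 + (s'.filter (fun w => G.Adj u w)).card) := by
          apply Finset.sum_le_sum
          intro u hu
          apply one_div_le_one_div_of_le
          · positivity
          · have hsub : s'.filter (fun w => G.Adj u w) ⊆ s.filter (fun w => G.Adj u w) :=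
              Finset.filter_subset_filter _ Finset.sdiff_subset
            have h2 : ((s'.filter (fun w => G.Adj u w)).card : ℝ)
                ≤ ((s.filter (fun w => G.Adj u w)).card : ℝ) := by
              exact_mod_cast Finset.card_le_card hsub
            linarith
        have hcardins : ((insert v t).card : ℝ) = t.card + 1 := by
          rw [Finset.card_insert_of_notMem hvt]; push_cast; ring
        rw [← hsplit, hcardins]
        linarith

theorem caro_wei {V : Type*} [Fintype V] (G : SimpleGraph V) [DecidableRel G.Adj] :
    ∃ s : Finset V, (↑s : Set V).Pairwise (fun a b => ¬ G.Adj a b) ∧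
      ∑ v : V, (1 : ℝ) / (1 + G.degree v) ≤ s.card := by
  classical
  obtain ⟨t, _, hind, hsum⟩ := caro_wei_aux G (Finset.univ.card) Finset.univ rfl
  refine ⟨t, hind, ?_⟩
  have : ∀ v : V, (Finset.univ.filter (fun w => G.Adj v w)).card = G.degree v := by
    intro v
    rw [SimpleGraph.degree, SimpleGraph.neighborFinset_eq_filter]
  calc ∑ v : V, (1 : ℝ) / (1 + G.degree v)
      = ∑ v ∈ Finset.univ, (1:ℝ) / (1 + (Finset.univ.filter (fun w => G.Adj v w)).card) := by
        apply Finset.sum_congr rfl; intro v _; rw [this v]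
    _ ≤ t.card := hsum
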